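/- arXiv:2603.10406 — 2 statements merged into one kernel-verified Lean document; each statement's English description precedes it below -/
import Mathlib

section
/- Let n ≥ 9 be an integer, let μ = μ₂(𝔏(Q'_n)) be the second-smallest eigenvalue of 𝔏(Q'_n), and let v = (v₁,…,v_n)ᵀ be an eigenvector of 𝔏(Q'_n) with eigenvalue μ. Then there exists θ ∈ (0, π/3] satisfying 2cos θ = 2 − μ such that |v₂ − v₁| ≤ (2μ·|cos((2n−5)θ/2)|)/(n·cos(θ/2)) · |v_n|. -/
open Matrix

/-- The ascending sorted list of eigenvalues (with multiplicity) of a real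
symmetric (Hermitian) matrix; junk value `[]` otherwise. -/
noncomputable def eigsList {m : Type*} [Fintype m] [DecidableEq m]
    (M : Matrix m m ℝ) : List ℝ :=
  if h : M.IsHermitian then Multiset.sort (Finset.univ.val.map h.eigenvalues) (· ≤ ·)
  else []

/-- The `k`-th largest eigenvalue (1-indexed, counted with multiplicity). -/
noncomputable def kthLargest {m : Type*} [Fintype m] [DecidableEq m]
    (M : Matrix m m ℝ) (k : ℕ) : ℝ :=
  (eigsList M).getD (Fintype.card m - k) 0

/-- The `k`-th smallest eigenvalue (1-indexed, counted with multiplicity). -/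
noncomputable def kthSmallest {m : Type*} [Fintype m] [DecidableEq m]
    (M : Matrix m m ℝ) (k : ℕ) : ℝ :=
  (eigsList M).getD (k - 1) 0

/-- The Laplacian `𝔏(M) = diag(M·1) − M`. -/
noncomputable def Lap {n : ℕ} (M : Matrix (Fin n) (Fin n) ℝ) : Matrix (Fin n) (Fin n) ℝ :=
  Matrix.diagonal (fun i => ∑ j, M i j) - M

/-- The matrix `Q_n` (1-indexed description, realized on `Fin n`). -/
noncomputable def Qmat (n : ℕ) : Matrix (Fin n) (Fin n) ℝ := fun i j =>
  let d := ((i.val : ℤ) - (j.val : ℤ)).natAbs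
  if d = 0 then
    (if i.val = 0 ∨ i.val = n - 1 then ((n : ℝ) ^ 2 - n - 6) / 2
     else if i.val = 1 ∨ i.val = n - 2 then ((n : ℝ) ^ 2 - 3 * n - 2) / 2
     else ((n : ℝ) ^ 2 - 3 * n - 6) / 2)
  else if d = 1 then (n : ℝ) - 2
  else if d = 2 then 2
  else 0

/-- The matrix `Q'_n` (1-indexed description, realized on `Fin n`). -/
noncomputable def Qp (n : ℕ) : Matrix (Fin n) (Fin n) ℝ := fun i j =>
  let a := i.val + 1
  let b := j.val + 1
  if (a = 1 ∧ b = 2) ∨ (a = 2 ∧ b = 1) then (n : ℝ) - 2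
  else if (a = 1 ∧ b = 3) ∨ (a = 3 ∧ b = 1) then 2
  else if a = 2 ∧ b = 2 then 1
  else if (a = 2 ∧ b = 3) ∨ (a = 3 ∧ b = 2) then 1
  else if a = 3 ∧ b = 3 then (n : ℝ) - 4
  else if (3 ≤ a ∧ a ≤ n - 1 ∧ b = a + 1) ∨ (3 ≤ b ∧ b ≤ n - 1 ∧ a = b + 1) then 1
  else if a = b ∧ 4 ≤ a ∧ a ≤ n - 1 then (n : ℝ) - 2
  else if a = n ∧ b = n then (n : ℝ) - 1
  else 0

lemma Qp_apply {n : ℕ} (i j : ℕ) (hi : i < n) (hj : j < n) :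
    Qp n ⟨i, hi⟩ ⟨j, hj⟩ = (if (i + 1 = 1 ∧ j + 1 = 2) ∨ (i + 1 = 2 ∧ j + 1 = 1) then (n : ℝ) - 2
  else if (i + 1 = 1 ∧ j + 1 = 3) ∨ (i + 1 = 3 ∧ j + 1 = 1) then 2
  else if i + 1 = 2 ∧ j + 1 = 2 then 1
  else if (i + 1 = 2 ∧ j + 1 = 3) ∨ (i + 1 = 3 ∧ j + 1 = 2) then 1
  else if i + 1 = 3 ∧ j + 1 = 3 then (n : ℝ) - 4
  else if (3 ≤ i + 1 ∧ i + 1 ≤ n - 1 ∧ j + 1 = i + 1 + 1) ∨ (3 ≤ j + 1 ∧ j + 1 ≤ n - 1 ∧ i + 1 = j + 1 + 1) then 1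
  else if i + 1 = j + 1 ∧ 4 ≤ i + 1 ∧ i + 1 ≤ n - 1 then (n : ℝ) - 2
  else if i + 1 = n ∧ j + 1 = n then (n : ℝ) - 1
  else 0) := rfl

lemma Qp_symm {n : ℕ} (i j : Fin n) : Qp n i j = Qp n j i := by
  rcases i with ⟨i, hi⟩; rcases j with ⟨j, hj⟩
  rw [Qp_apply, Qp_apply]
  by_cases h1 : (i + 1 = 1 ∧ j + 1 = 2) ∨ (i + 1 = 2 ∧ j + 1 = 1)
  · rw [if_pos h1, if_pos (by omega : (j + 1 = 1 ∧ i + 1 = 2) ∨ (j + 1 = 2 ∧ i + 1 = 1))]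
  rw [if_neg h1, if_neg (by omega : ¬((j + 1 = 1 ∧ i + 1 = 2) ∨ (j + 1 = 2 ∧ i + 1 = 1)))]
  by_cases h2 : (i + 1 = 1 ∧ j + 1 = 3) ∨ (i + 1 = 3 ∧ j + 1 = 1)
  · rw [if_pos h2, if_pos (by omega : (j + 1 = 1 ∧ i + 1 = 3) ∨ (j + 1 = 3 ∧ i + 1 = 1))]
  rw [if_neg h2, if_neg (by omega : ¬((j + 1 = 1 ∧ i + 1 = 3) ∨ (j + 1 = 3 ∧ i + 1 = 1)))]
  by_cases h3 : i + 1 = 2 ∧ j + 1 = 2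
  · rw [if_pos h3, if_pos (by omega : j + 1 = 2 ∧ i + 1 = 2)]
  rw [if_neg h3, if_neg (by omega : ¬(j + 1 = 2 ∧ i + 1 = 2))]
  by_cases h4 : (i + 1 = 2 ∧ j + 1 = 3) ∨ (i + 1 = 3 ∧ j + 1 = 2)
  · rw [if_pos h4, if_pos (by omega : (j + 1 = 2 ∧ i + 1 = 3) ∨ (j + 1 = 3 ∧ i + 1 = 2))]
  rw [if_neg h4, if_neg (by omega : ¬((j + 1 = 2 ∧ i + 1 = 3) ∨ (j + 1 = 3 ∧ i + 1 = 2)))]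
  by_cases h5 : i + 1 = 3 ∧ j + 1 = 3
  · rw [if_pos h5, if_pos (by omega : j + 1 = 3 ∧ i + 1 = 3)]
  rw [if_neg h5, if_neg (by omega : ¬(j + 1 = 3 ∧ i + 1 = 3))]
  by_cases h6 : (3 ≤ i + 1 ∧ i + 1 ≤ n - 1 ∧ j + 1 = i + 1 + 1) ∨ (3 ≤ j + 1 ∧ j + 1 ≤ n - 1 ∧ i + 1 = j + 1 + 1)
  · rw [if_pos h6, if_pos (by omega : (3 ≤ j + 1 ∧ j + 1 ≤ n - 1 ∧ i + 1 = j + 1 + 1) ∨ (3 ≤ i + 1 ∧ i + 1 ≤ n - 1 ∧ j + 1 = i + 1 + 1))]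
  rw [if_neg h6, if_neg (by omega : ¬((3 ≤ j + 1 ∧ j + 1 ≤ n - 1 ∧ i + 1 = j + 1 + 1) ∨ (3 ≤ i + 1 ∧ i + 1 ≤ n - 1 ∧ j + 1 = i + 1 + 1)))]
  by_cases h7 : i + 1 = j + 1 ∧ 4 ≤ i + 1 ∧ i + 1 ≤ n - 1
  · rw [if_pos h7, if_pos (by omega : j + 1 = i + 1 ∧ 4 ≤ j + 1 ∧ j + 1 ≤ n - 1)]
  rw [if_neg h7, if_neg (by omega : ¬(j + 1 = i + 1 ∧ 4 ≤ j + 1 ∧ j + 1 ≤ n - 1))]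
  by_cases h8 : i + 1 = n ∧ j + 1 = n
  · rw [if_pos h8, if_pos (by omega : j + 1 = n ∧ i + 1 = n)]
  rw [if_neg h8, if_neg (by omega : ¬(j + 1 = n ∧ i + 1 = n))]

lemma Qp_eq_zero {n i j : ℕ} (hi : i < n) (hj : j < n)
    (h1 : ¬((i + 1 = 1 ∧ j + 1 = 2) ∨ (i + 1 = 2 ∧ j + 1 = 1)))
    (h2 : ¬((i + 1 = 1 ∧ j + 1 = 3) ∨ (i + 1 = 3 ∧ j + 1 = 1)))
    (h3 : ¬(i + 1 = 2 ∧ j + 1 = 2))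
    (h4 : ¬((i + 1 = 2 ∧ j + 1 = 3) ∨ (i + 1 = 3 ∧ j + 1 = 2)))
    (h5 : ¬(i + 1 = 3 ∧ j + 1 = 3))
    (h6 : ¬((3 ≤ i + 1 ∧ i + 1 ≤ n - 1 ∧ j + 1 = i + 1 + 1) ∨ (3 ≤ j + 1 ∧ j + 1 ≤ n - 1 ∧ i + 1 = j + 1 + 1)))
    (h7 : ¬(i + 1 = j + 1 ∧ 4 ≤ i + 1 ∧ i + 1 ≤ n - 1))
    (h8 : ¬(i + 1 = n ∧ j + 1 = n)) :
    Qp n ⟨i, hi⟩ ⟨j, hj⟩ = 0 := by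
  rw [Qp_apply, if_neg h1, if_neg h2, if_neg h3, if_neg h4, if_neg h5, if_neg h6, if_neg h7,
    if_neg h8]

lemma Qp_eq_one {n i j : ℕ} (hi : i < n) (hj : j < n)
    (h1 : ¬((i + 1 = 1 ∧ j + 1 = 2) ∨ (i + 1 = 2 ∧ j + 1 = 1)))
    (h2 : ¬((i + 1 = 1 ∧ j + 1 = 3) ∨ (i + 1 = 3 ∧ j + 1 = 1)))
    (h3 : ¬(i + 1 = 2 ∧ j + 1 = 2))
    (h4 : ¬((i + 1 = 2 ∧ j + 1 = 3) ∨ (i + 1 = 3 ∧ j + 1 = 2)))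
    (h5 : ¬(i + 1 = 3 ∧ j + 1 = 3))
    (h6 : (3 ≤ i + 1 ∧ i + 1 ≤ n - 1 ∧ j + 1 = i + 1 + 1) ∨ (3 ≤ j + 1 ∧ j + 1 ≤ n - 1 ∧ i + 1 = j + 1 + 1)) :
    Qp n ⟨i, hi⟩ ⟨j, hj⟩ = 1 := by
  rw [Qp_apply, if_neg h1, if_neg h2, if_neg h3, if_neg h4, if_neg h5, if_pos h6]

lemma Qp_nonneg {n : ℕ} (hn : 9 ≤ n) (i j : Fin n) : 0 ≤ Qp n i j := by
  have h9 : (9 : ℝ) ≤ (n : ℝ) := by exact_mod_cast hn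
  have hite : ∀ (c : Prop) (_ : Decidable c) (a b : ℝ), 0 ≤ a → 0 ≤ b → 0 ≤ @ite ℝ c ‹_› a b := by
    intro c hc a b ha hb; split_ifs <;> assumption
  rcases i with ⟨i, hi⟩; rcases j with ⟨j, hj⟩
  rw [Qp_apply]
  apply hite _ _ _ _ (by linarith)
  apply hite _ _ _ _ (by norm_num)
  apply hite _ _ _ _ (by norm_num)
  apply hite _ _ _ _ (by norm_num)
  apply hite _ _ _ _ (by linarith)
  apply hite _ _ _ _ (by norm_num)
  apply hite _ _ _ _ (by linarith)
  apply hite _ _ _ _ (by linarith)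
  norm_num

lemma lap_mulVec {n : ℕ} (M : Matrix (Fin n) (Fin n) ℝ) (w : Fin n → ℝ) (i : Fin n) :
    (Lap M *ᵥ w) i = ∑ j, M i j * (w i - w j) := by
  simp only [Lap, sub_mulVec, mulVec, dotProduct, diagonal, Pi.sub_apply, of_apply,
    Matrix.sub_apply, Matrix.sub_apply, ite_mul, zero_mul, Finset.sum_ite_eq]
  simp [mul_sub, Finset.sum_mul, Finset.sum_sub_distrib, Finset.mul_sum, sub_mul]

lemma lap_mulVec_const {n : ℕ} (M : Matrix (Fin n) (Fin n) ℝ) (c : ℝ) :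
    Lap M *ᵥ (fun _ => c) = 0 := by
  funext i; rw [lap_mulVec]; simp

lemma sum_support {n : ℕ} (f : Fin n → ℝ) (S : Finset (Fin n)) (h : ∀ j, j ∉ S → f j = 0) :
    ∑ j, f j = ∑ j ∈ S, f j :=
  (Finset.sum_subset (Finset.subset_univ S) (fun x _ hx => h x hx)).symm

lemma quadform {n : ℕ} (M : Matrix (Fin n) (Fin n) ℝ) (hsym : ∀ i j, M i j = M j i)
    (x : Fin n → ℝ) :
    x ⬝ᵥ (Lap M *ᵥ x) = (1/2) * ∑ i, ∑ j, M i j * (x i - x j)^2 := by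
  have swap : ∑ i, ∑ j, M i j * x j ^ 2 = ∑ i, ∑ j, M i j * x i ^ 2 := by
    rw [Finset.sum_comm]
    exact Finset.sum_congr rfl fun i _ => Finset.sum_congr rfl fun j _ => by rw [hsym]
  have lhs : x ⬝ᵥ (Lap M *ᵥ x) = ∑ i, ∑ j, (M i j * x i ^ 2 - M i j * (x i * x j)) := by
    simp only [dotProduct, lap_mulVec]
    exact Finset.sum_congr rfl fun i _ => by
      rw [Finset.mul_sum]; exact Finset.sum_congr rfl fun j _ => by ring
  have rhs : ∀ i j, M i j * (x i - x j)^2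
      = (M i j * x i ^ 2 - M i j * (x i * x j)) + (M i j * x j ^ 2 - M i j * (x i * x j)) := by
    intro i j; ring
  rw [lhs]
  have expand : ∑ i, ∑ j, M i j * (x i - x j)^2
      = (∑ i, ∑ j, (M i j * x i ^ 2 - M i j * (x i * x j)))
        + (∑ i, ∑ j, (M i j * x j ^ 2 - M i j * (x i * x j))) := by
    rw [← Finset.sum_add_distrib]
    exact Finset.sum_congr rfl fun i _ => by
      rw [← Finset.sum_add_distrib]
      exact Finset.sum_congr rfl fun j _ => rhs i j
  rw [expand]
  have e2 : ∑ i, ∑ j, (M i j * x j ^ 2 - M i j * (x i * x j))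
      = ∑ i, ∑ j, (M i j * x i ^ 2 - M i j * (x i * x j)) := by
    simp only [Finset.sum_sub_distrib]
    rw [swap]
  rw [e2]; ring

lemma quadform_nonneg {n : ℕ} (M : Matrix (Fin n) (Fin n) ℝ) (hsym : ∀ i j, M i j = M j i)
    (hpos : ∀ i j, 0 ≤ M i j) (x : Fin n → ℝ) : 0 ≤ x ⬝ᵥ (Lap M *ᵥ x) := by
  rw [quadform M hsym x]
  have h := Finset.sum_nonneg (fun i (_ : i ∈ Finset.univ) =>
    Finset.sum_nonneg fun j (_ : j ∈ Finset.univ) => mul_nonneg (hpos i j) (sq_nonneg (x i - x j)))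
  linarith

lemma lap_isHermitian {n : ℕ} (M : Matrix (Fin n) (Fin n) ℝ) (hsym : ∀ i j, M i j = M j i) :
    (Lap M).IsHermitian := by
  unfold Matrix.IsHermitian
  ext i j
  simp only [conjTranspose_apply, Lap, Matrix.sub_apply, diagonal_apply, star_trivial]
  rw [hsym j i]
  by_cases h : i = j
  · subst h; simp
  · rw [if_neg h, if_neg (Ne.symm h)]

section rows
variable {n : ℕ} (hn : n ≥ 9) (w : Fin n → ℝ)
include hn

lemma row0 : (Lap (Qp n) *ᵥ w) ⟨0, by omega⟩ =
    ((n : ℝ) - 2) * (w ⟨0, by omega⟩ - w ⟨1, by omega⟩) + 2 * (w ⟨0, by omega⟩ - w ⟨2, by omega⟩) := by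
  rw [lap_mulVec]
  rw [sum_support _ ({⟨1, by omega⟩, ⟨2, by omega⟩} : Finset (Fin n))]
  · rw [Finset.sum_insert (by simp only [Finset.mem_singleton, Fin.mk.injEq]; omega),
      Finset.sum_singleton, Qp_apply, Qp_apply]
    norm_num
  · intro j hj
    rcases j with ⟨j, hjn⟩
    simp only [Finset.mem_insert, Finset.mem_singleton, Fin.mk.injEq] at hj
    rw [Qp_eq_zero (by omega) hjn (by omega) (by omega) (by omega) (by omega) (by omega)
      (by omega) (by omega) (by omega), zero_mul]

lemma row1 : (Lap (Qp n) *ᵥ w) ⟨1, by omega⟩ =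
    ((n : ℝ) - 2) * (w ⟨1, by omega⟩ - w ⟨0, by omega⟩) + (w ⟨1, by omega⟩ - w ⟨2, by omega⟩) := by
  rw [lap_mulVec]
  rw [sum_support _ ({⟨0, by omega⟩, ⟨2, by omega⟩} : Finset (Fin n))]
  · rw [Finset.sum_insert (by simp only [Finset.mem_singleton, Fin.mk.injEq]; omega),
      Finset.sum_singleton, Qp_apply, Qp_apply]
    norm_num
  · intro j hj
    rcases j with ⟨j, hjn⟩
    simp only [Finset.mem_insert, Finset.mem_singleton, Fin.mk.injEq] at hj
    by_cases hj1 : j = 1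
    · subst hj1; rw [sub_self, mul_zero]
    · rw [Qp_eq_zero (by omega) hjn (by omega) (by omega) (by omega) (by omega) (by omega)
        (by omega) (by omega) (by omega), zero_mul]

lemma row2 : (Lap (Qp n) *ᵥ w) ⟨2, by omega⟩ =
    2 * (w ⟨2, by omega⟩ - w ⟨0, by omega⟩) + (w ⟨2, by omega⟩ - w ⟨1, by omega⟩)
      + (w ⟨2, by omega⟩ - w ⟨3, by omega⟩) := by
  rw [lap_mulVec]
  rw [sum_support _ ({⟨0, by omega⟩, ⟨1, by omega⟩, ⟨3, by omega⟩} : Finset (Fin n))]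
  · rw [Finset.sum_insert (by simp only [Finset.mem_insert, Finset.mem_singleton, Fin.mk.injEq]; omega),
      Finset.sum_insert (by simp only [Finset.mem_singleton, Fin.mk.injEq]; omega),
      Finset.sum_singleton, Qp_apply, Qp_apply,
      Qp_eq_one (by omega) (by omega) (by omega) (by omega) (by omega) (by omega) (by omega)
        (by omega)]
    norm_num
    ring
  · intro j hj
    rcases j with ⟨j, hjn⟩
    simp only [Finset.mem_insert, Finset.mem_singleton, Fin.mk.injEq] at hj
    by_cases hj1 : j = 2
    · subst hj1; rw [sub_self, mul_zero]
    · rw [Qp_eq_zero (by omega) hjn (by omega) (by omega) (by omega) (by omega) (by omega)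
        (by omega) (by omega) (by omega), zero_mul]

lemma rowi (i : ℕ) (h3 : 3 ≤ i) (h2 : i ≤ n - 2) : (Lap (Qp n) *ᵥ w) ⟨i, by omega⟩ =
    (w ⟨i, by omega⟩ - w ⟨i - 1, by omega⟩) + (w ⟨i, by omega⟩ - w ⟨i + 1, by omega⟩) := by
  rw [lap_mulVec]
  rw [sum_support _ ({⟨i - 1, by omega⟩, ⟨i + 1, by omega⟩} : Finset (Fin n))]
  · rw [Finset.sum_insert (by simp only [Finset.mem_singleton, Fin.mk.injEq]; omega),
      Finset.sum_singleton,
      Qp_eq_one (by omega) (by omega) (by omega) (by omega) (by omega) (by omega) (by omega)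
        (by omega),
      Qp_eq_one (by omega) (by omega) (by omega) (by omega) (by omega) (by omega) (by omega)
        (by omega)]
    ring
  · intro j hj
    rcases j with ⟨j, hjn⟩
    simp only [Finset.mem_insert, Finset.mem_singleton, Fin.mk.injEq] at hj
    by_cases hj1 : j = i
    · subst hj1; rw [sub_self, mul_zero]
    · rw [Qp_eq_zero (by omega) hjn (by omega) (by omega) (by omega) (by omega) (by omega)
        (by omega) (by omega) (by omega), zero_mul]

lemma rowlast : (Lap (Qp n) *ᵥ w) ⟨n - 1, by omega⟩ =
    w ⟨n - 1, by omega⟩ - w ⟨n - 2, by omega⟩ := by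
  rw [lap_mulVec]
  rw [sum_support _ ({⟨n - 2, by omega⟩} : Finset (Fin n))]
  · rw [Finset.sum_singleton,
      Qp_eq_one (by omega) (by omega) (by omega) (by omega) (by omega) (by omega) (by omega)
        (by omega)]
    ring
  · intro j hj
    rcases j with ⟨j, hjn⟩
    simp only [Finset.mem_singleton, Fin.mk.injEq] at hj
    by_cases hj1 : j = n - 1
    · subst hj1; rw [sub_self, mul_zero]
    · rw [Qp_eq_zero (by omega) hjn (by omega) (by omega) (by omega) (by omega) (by omega)
        (by omega) (by omega) (by omega), zero_mul]
end rows

lemma ker_const {n : ℕ} (hn : n ≥ 9) (w : Fin n → ℝ) (h0 : Lap (Qp n) *ᵥ w = 0) (i : Fin n) :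
    w i = w ⟨n - 1, by omega⟩ := by
  have h9 : (9 : ℝ) ≤ (n : ℝ) := by exact_mod_cast hn
  have hlast := rowlast hn w
  rw [h0] at hlast
  simp only [Pi.zero_apply] at hlast
  have h2 : ∀ k : ℕ, k ≤ n - 3 → w ⟨n - 1 - k, by omega⟩ = w ⟨n - 1, by omega⟩ := by
    intro k
    induction k using Nat.strong_induction_on with
    | _ k ih =>
      intro hk
      match k with
      | 0 => rfl
      | 1 =>
        have e : (⟨n - 1 - 1, by omega⟩ : Fin n) = ⟨n - 2, by omega⟩ := by rw [Fin.mk.injEq]; omega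
        rw [e]; linarith [hlast]
      | (k + 2) =>
        have hrow := rowi hn w (n - 2 - k) (by omega) (by omega)
        rw [h0] at hrow
        simp only [Pi.zero_apply] at hrow
        have e1 : (⟨n - 2 - k - 1, by omega⟩ : Fin n) = ⟨n - 1 - (k + 2), by omega⟩ :=
          by rw [Fin.mk.injEq]; omega
        have e2 : (⟨n - 2 - k, by omega⟩ : Fin n) = ⟨n - 1 - (k + 1), by omega⟩ :=
          by rw [Fin.mk.injEq]; omega
        have e3 : (⟨n - 2 - k + 1, by omega⟩ : Fin n) = ⟨n - 1 - k, by omega⟩ :=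
          by rw [Fin.mk.injEq]; omega
        rw [e1, e2, e3] at hrow
        have ih1 := ih (k + 1) (by omega) (by omega)
        have ih0 := ih k (by omega) (by omega)
        linarith [hrow, ih1, ih0]
  by_cases hge : 2 ≤ i.val
  · have := h2 (n - 1 - i.val) (by omega)
    have e : (⟨n - 1 - (n - 1 - i.val), by omega⟩ : Fin n) = i := by rw [Fin.mk.injEq]; omega
    rwa [e] at this
  · have hw2 : w ⟨2, by omega⟩ = w ⟨n - 1, by omega⟩ := by
      have := h2 (n - 3) (le_refl _)
      have e : (⟨n - 1 - (n - 3), by omega⟩ : Fin n) = ⟨2, by omega⟩ := by rw [Fin.mk.injEq]; omega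
      rwa [e] at this
    have e0 := row0 hn w
    have e1 := row1 hn w
    rw [h0] at e0 e1
    simp only [Pi.zero_apply] at e0 e1
    have hu : (3 * (n : ℝ) - 4) * (w ⟨0, by omega⟩ - w ⟨2, by omega⟩) = 0 := by
      linear_combination (-((n:ℝ) - 1)) * e0 + (-((n:ℝ) - 2)) * e1
    have hv : (3 * (n : ℝ) - 4) * (w ⟨1, by omega⟩ - w ⟨2, by omega⟩) = 0 := by
      linear_combination (-((n:ℝ) - 2)) * e0 + (-(n:ℝ)) * e1
    have h34 : (0:ℝ) < 3 * (n : ℝ) - 4 := by linarith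
    have hu0 : w ⟨0, by omega⟩ = w ⟨2, by omega⟩ := by
      rcases mul_eq_zero.mp hu with h | h
      · exact absurd h (ne_of_gt h34)
      · linarith [h]
    have hv0 : w ⟨1, by omega⟩ = w ⟨2, by omega⟩ := by
      rcases mul_eq_zero.mp hv with h | h
      · exact absurd h (ne_of_gt h34)
      · linarith [h]
    have hiv : i.val = 0 ∨ i.val = 1 := by omega
    rcases hiv with h | h
    · have : i = ⟨0, by omega⟩ := Fin.ext h
      rw [this]; exact hu0.trans hw2
    · have : i = ⟨1, by omega⟩ := Fin.ext h
      rw [this]; exact hv0.trans hw2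

lemma mu_bounds {n : ℕ} (hn : n ≥ 9) :
    0 < kthSmallest (Lap (Qp n)) 2 ∧ kthSmallest (Lap (Qp n)) 2 ≤ 1 := by
  have h9 : (9 : ℝ) ≤ (n : ℝ) := by exact_mod_cast hn
  have h : (Lap (Qp n)).IsHermitian := lap_isHermitian _ (fun i j => Qp_symm i j)
  set f := h.eigenvalues with hf
  set b := h.eigenvectorBasis with hb
  have heig : ∀ i, Lap (Qp n) *ᵥ ⇑(b i) = f i • ⇑(b i) := fun i => h.mulVec_eigenvectorBasis i
  have hinner : ∀ u w : EuclideanSpace ℝ (Fin n), (inner ℝ u w : ℝ) = ⇑u ⬝ᵥ ⇑w := by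
    intro u w
    rw [PiLp.inner_apply]
    simp [dotProduct, mul_comm]
  have hnonneg : ∀ i, 0 ≤ f i := by
    intro i
    have he := h.eigenvalues_eq i
    have hstar : star ⇑(b i) = ⇑(b i) := by funext k; simp
    rw [hstar] at he
    have : f i = ⇑(b i) ⬝ᵥ (Lap (Qp n) *ᵥ ⇑(b i)) := by
      rw [hf, he]; simp [RCLike.re_to_real]; rfl
    rw [this]
    exact quadform_nonneg _ (fun i j => Qp_symm i j) (Qp_nonneg hn) _
  have hconst : ∀ i, f i = 0 → ∀ k : Fin n, (b i) k = (b i) ⟨n - 1, by omega⟩ := by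
    intro i hi k
    have hm := heig i
    rw [hi, zero_smul] at hm
    exact ker_const hn _ hm k
  have huniq : ∀ i j, f i = 0 → f j = 0 → i = j := by
    intro i j hi hj
    by_contra hij
    have hinn : (inner ℝ (b i) (b j) : ℝ) = 0 := b.orthonormal.2 hij
    rw [PiLp.inner_apply] at hinn
    simp only [RCLike.inner_apply, starRingEnd_apply, star_trivial] at hinn
    have hzero : (n : ℝ) * ((b i) ⟨n - 1, by omega⟩ * (b j) ⟨n - 1, by omega⟩) = 0 := by
      rw [← hinn]
      rw [Finset.sum_congr rfl (fun k _ => by rw [hconst i hi k, hconst j hj k])]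
      rw [Finset.sum_const, Finset.card_univ, Fintype.card_fin, nsmul_eq_mul]; ring
    have hn0 : (n : ℝ) ≠ 0 := by positivity
    rcases mul_eq_zero.mp hzero with hc | hc
    · exact absurd hc hn0
    rcases mul_eq_zero.mp hc with hc' | hc'
    · have hb0 : b i = 0 := by
        ext k; rw [hconst i hi k, hc']; rfl
      have := b.orthonormal.1 i
      rw [hb0] at this; simp at this
    · have hb0 : b j = 0 := by
        ext k; rw [hconst j hj k, hc']; rfl
      have := b.orthonormal.1 j
      rw [hb0] at this; simp at this
  -- the sorted list
  have hlist : eigsList (Lap (Qp n)) = Multiset.sort (Finset.univ.val.map f) (· ≤ ·) := by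
    rw [eigsList, dif_pos h]
  set s := Multiset.sort (Finset.univ.val.map f) (· ≤ ·) with hs
  have hlen : s.length = n := by
    rw [hs, Multiset.length_sort, Multiset.card_map]
    simp
  obtain ⟨A, B, t, hABt⟩ : ∃ A B t, s = A :: B :: t := by
    rcases s with _ | ⟨A, _ | ⟨B, t⟩⟩
    · simp at hlen; omega
    · simp at hlen; omega
    · exact ⟨A, B, t, rfl⟩
  have hmuB : kthSmallest (Lap (Qp n)) 2 = B := by
    rw [kthSmallest, hlist, hABt]
    rfl
  have hsorted : List.Pairwise (· ≤ ·) s := Multiset.pairwise_sort _ _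
  rw [hABt] at hsorted
  have hAB : A ≤ B := (List.pairwise_cons.mp hsorted).1 B (by simp)
  have hBt : ∀ x ∈ t, B ≤ x := (List.pairwise_cons.mp (List.pairwise_cons.mp hsorted).2).1
  have hM : (Finset.univ.val.map f) = (A ::ₘ B ::ₘ (t : Multiset ℝ)) := by
    have h1 : (↑s : Multiset ℝ) = Finset.univ.val.map f := by
      rw [hs]; exact Multiset.sort_eq _ _
    rw [← h1, hABt]
    simp
  have hmem : ∀ x : ℝ, x ∈ Finset.univ.val.map f → ∃ i, f i = x := by
    intro x hx
    rcases Multiset.mem_map.mp hx with ⟨i, _, hi⟩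
    exact ⟨i, hi⟩
  have hmemA : ∃ i, f i = A := hmem A (by rw [hM]; simp)
  have hdet : (Lap (Qp n)).det = 0 := by
    rw [← Matrix.exists_mulVec_eq_zero_iff]
    refine ⟨fun _ => 1, ?_, lap_mulVec_const _ 1⟩
    intro hcon
    have := congrFun hcon ⟨0, by omega⟩
    simp at this
  obtain ⟨i0, hi0⟩ : ∃ i, f i = 0 := by
    have hp := h.det_eq_prod_eigenvalues
    rw [hdet] at hp
    rcases Finset.prod_eq_zero_iff.mp hp.symm with ⟨i, _, hz⟩
    exact ⟨i, by exact_mod_cast hz⟩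
  have hcount : ∀ (P : ℝ → Prop) (inst : DecidablePred P),
      Multiset.countP P (Finset.univ.val.map f) = (Finset.univ.filter (fun i => P (f i))).card := by
    intro P inst
    rw [Multiset.countP_eq_card_filter, Multiset.filter_map, Multiset.card_map]
    rfl
  have hcount2 : ∀ (P : ℝ → Prop) (inst : DecidablePred P),
      Multiset.countP P (Finset.univ.val.map f)
        = Multiset.countP P (t : Multiset ℝ) + ((if P A then 1 else 0) + (if P B then 1 else 0)) := by
    intro P inst
    rw [hM, Multiset.countP_cons, Multiset.countP_cons]
    omega
  have hA0 : 0 ≤ A := by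
    rcases hmemA with ⟨i, hi⟩; rw [← hi]; exact hnonneg i
  have hBpos : 0 < B := by
    rcases lt_or_ge 0 B with hpos | hle
    · exact hpos
    have hA : A = 0 := le_antisymm (hAB.trans hle) hA0
    have hB : B = 0 := le_antisymm hle (hA ▸ hAB)
    have hcard : 2 ≤ (Finset.univ.filter (fun i => f i = 0)).card := by
      have e1 := hcount (fun y => y = 0) (fun y => by infer_instance)
      have e2 := hcount2 (fun y => y = 0) (fun y => by infer_instance)
      rw [e2] at e1
      subst hA; subst hB
      norm_num at e1
      omega
    obtain ⟨i, hi, j, hj, hij⟩ := Finset.one_lt_card.mp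
      (show 1 < (Finset.univ.filter (fun i => f i = 0)).card by omega)
    simp only [Finset.mem_filter] at hi hj
    exact absurd (huniq i j hi.2 hj.2) hij
  have hother : ∀ i, i ≠ i0 → B ≤ f i := by
    intro i hii0
    by_contra hlt
    push_neg at hlt
    have hsub : ({i, i0} : Finset (Fin n)) ⊆ Finset.univ.filter (fun k => f k < B) := by
      intro k hk
      simp only [Finset.mem_insert, Finset.mem_singleton] at hk
      rcases hk with rfl | rfl
      · simp [hlt]
      · simp [hi0, hBpos]
    have hcard2 : 2 ≤ (Finset.univ.filter (fun k => f k < B)).card := by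
      have hcc := Finset.card_le_card hsub
      rwa [Finset.card_insert_of_notMem (by simpa using hii0), Finset.card_singleton] at hcc
    have hle1 : (Finset.univ.filter (fun k => f k < B)).card ≤ 1 := by
      have e1 := hcount (fun y => y < B) (fun y => by infer_instance)
      have e2 := hcount2 (fun y => y < B) (fun y => by infer_instance)
      rw [e2] at e1
      have ht0 : Multiset.countP (fun y => y < B) (t : Multiset ℝ) = 0 := by
        rw [Multiset.countP_eq_zero]
        intro a ha
        exact not_lt.mpr (hBt a (by exact_mod_cast ha))
      rw [ht0] at e1
      simp only [lt_irrefl, if_false] at e1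
      split_ifs at e1 <;> omega
    omega
  refine ⟨by rw [hmuB]; exact hBpos, ?_⟩
  rw [hmuB]
  -- Rayleigh quotient with test vector
  set x : Fin n → ℝ := fun j => (j.val : ℝ) - ((n : ℝ) - 1) / 2 with hx
  have hgauss : (∑ i ∈ Finset.range n, (i : ℝ)) * 2 = (n : ℝ) * ((n : ℝ) - 1) := by
    have hcast := congrArg (Nat.cast (R := ℝ)) (Finset.sum_range_id_mul_two n)
    push_cast [Nat.cast_sub (by omega : 1 ≤ n)] at hcast
    exact hcast
  have hxsum : ∑ j, x j = 0 := by
    rw [hx]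
    rw [Finset.sum_sub_distrib, Finset.sum_const, Finset.card_univ, Fintype.card_fin,
      Fin.sum_univ_eq_sum_range (fun m => (m : ℝ)), nsmul_eq_mul]
    linarith
  have hdotL : x ⬝ᵥ (Lap (Qp n) *ᵥ x) = 2 * (n : ℝ) + 4 := by
    rw [dotProduct]
    rw [sum_support _ ({⟨0, by omega⟩, ⟨1, by omega⟩, ⟨2, by omega⟩, ⟨n - 1, by omega⟩} : Finset (Fin n))]
    · rw [Finset.sum_insert (by simp only [Finset.mem_insert, Finset.mem_singleton, Fin.mk.injEq]; omega),
        Finset.sum_insert (by simp only [Finset.mem_insert, Finset.mem_singleton, Fin.mk.injEq]; omega),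
        Finset.sum_insert (by simp only [Finset.mem_singleton, Fin.mk.injEq]; omega),
        Finset.sum_singleton, row0 hn x, row1 hn x, row2 hn x, rowlast hn x]
      simp only [hx]
      push_cast [Nat.cast_sub (by omega : 1 ≤ n), Nat.cast_sub (by omega : 2 ≤ n)]
      ring
    · intro j hj
      rcases j with ⟨jv, hjv⟩
      simp only [Finset.mem_insert, Finset.mem_singleton, Fin.mk.injEq] at hj
      rw [rowi hn x jv (by omega) (by omega)]
      have hz : (x ⟨jv, by omega⟩ - x ⟨jv - 1, by omega⟩) + (x ⟨jv, by omega⟩ - x ⟨jv + 1, by omega⟩) = 0 := by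
        simp only [hx]
        push_cast [Nat.cast_sub (by omega : 1 ≤ jv)]
        ring
      rw [hz, mul_zero]
  have hxxlow : ((n : ℝ) - 1) ^ 2 / 2 ≤ x ⬝ᵥ x := by
    rw [dotProduct]
    have hge := Finset.sum_le_sum_of_subset_of_nonneg
      (Finset.subset_univ ({⟨0, by omega⟩, ⟨n - 1, by omega⟩} : Finset (Fin n)))
      (fun j _ _ => mul_self_nonneg (x j))
    have hval : ∑ j ∈ ({⟨0, by omega⟩, ⟨n - 1, by omega⟩} : Finset (Fin n)), x j * x j
        = ((n : ℝ) - 1) ^ 2 / 2 := by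
      rw [Finset.sum_insert (by simp only [Finset.mem_singleton, Fin.mk.injEq]; omega),
        Finset.sum_singleton]
      simp only [hx]
      push_cast [Nat.cast_sub (by omega : 1 ≤ n)]
      ring
    rw [← hval]
    exact hge
  -- spectral expansion of the quadratic form
  have hT : (Lap (Qp n))ᵀ = Lap (Qp n) := by
    ext i j
    have hentry := congrFun (congrFun h i) j
    simp only [conjTranspose_apply, star_trivial] at hentry
    rw [transpose_apply, ← hentry]
  set c : Fin n → ℝ := fun i => ⇑(b i) ⬝ᵥ x with hc
  set xe : EuclideanSpace ℝ (Fin n) := WithLp.toLp 2 x with hxe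
  have hinn_bx : ∀ i, (inner ℝ (b i) xe : ℝ) = c i := fun i => hinner _ _
  have hinn_xb : ∀ i, (inner ℝ xe (b i) : ℝ) = c i := by
    intro i
    rw [real_inner_comm]
    exact hinn_bx i
  have hLxe : ∀ i, (inner ℝ (b i) (WithLp.toLp 2 (Lap (Qp n) *ᵥ x) : EuclideanSpace ℝ (Fin n)) : ℝ) = f i * c i := by
    intro i
    rw [hinner]
    show ⇑(b i) ⬝ᵥ (Lap (Qp n) *ᵥ x) = f i * c i
    rw [dotProduct_mulVec, ← mulVec_transpose, hT, heig i]
    rw [smul_dotProduct]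
    rfl
  have hxLx : x ⬝ᵥ (Lap (Qp n) *ᵥ x) = ∑ i, c i * (f i * c i) := by
    have hp := b.sum_inner_mul_inner xe (WithLp.toLp 2 (Lap (Qp n) *ᵥ x) : EuclideanSpace ℝ (Fin n))
    rw [Finset.sum_congr rfl (fun i _ => by rw [hinn_xb i, hLxe i])] at hp
    rw [hinner] at hp
    exact hp.symm
  have hxx : x ⬝ᵥ x = ∑ i, c i * c i := by
    have hp := b.sum_inner_mul_inner xe xe
    rw [Finset.sum_congr rfl (fun i _ => by rw [hinn_xb i, hinn_bx i])] at hp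
    rw [hinner] at hp
    exact hp.symm
  have hc0 : c i0 = 0 := by
    have hck : ∀ k : Fin n, (⇑(b i0) : Fin n → ℝ) k * x k = b i0 ⟨n - 1, by omega⟩ * x k := by
      intro k
      show b i0 k * x k = _
      rw [hconst i0 hi0 k]
    have : c i0 = ∑ k, (⇑(b i0) : Fin n → ℝ) k * x k := rfl
    rw [this, Finset.sum_congr rfl (fun k _ => hck k), ← Finset.mul_sum, hxsum, mul_zero]
  have hray : B * (x ⬝ᵥ x) ≤ x ⬝ᵥ (Lap (Qp n) *ᵥ x) := by
    rw [hxx, hxLx, Finset.mul_sum]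
    apply Finset.sum_le_sum
    intro i _
    by_cases hii : i = i0
    · subst hii; rw [hc0]; simp
    · have hbi := hother i hii
      have := mul_le_mul_of_nonneg_right hbi (mul_self_nonneg (c i))
      calc B * (c i * c i) = B * c i * c i := by ring
        _ ≤ _ := by nlinarith [mul_self_nonneg (c i), hbi]
  have hfinal : B ≤ 1 := by
    nlinarith [hray, hdotL, hxxlow, hBpos]
  exact hfinal

set_option maxHeartbeats 1600000 in
theorem stmt8 (n : ℕ) (hn : 9 ≤ n) (mu : ℝ) (hmu : mu = kthSmallest (Lap (Qp n)) 2)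
    (v : Fin n → ℝ) (hv : v ≠ 0) (hev : Lap (Qp n) *ᵥ v = mu • v) :
    ∃ θ : ℝ, 0 < θ ∧ θ ≤ Real.pi / 3 ∧ 2 * Real.cos θ = 2 - mu ∧
      |v ⟨1, by omega⟩ - v ⟨0, by omega⟩| ≤
        (2 * mu * |Real.cos ((2 * (n : ℝ) - 5) * θ / 2)|) / ((n : ℝ) * Real.cos (θ / 2)) *
          |v ⟨n - 1, by omega⟩| := by
  have h9 : (9 : ℝ) ≤ (n : ℝ) := by exact_mod_cast hn
  obtain ⟨hmu0, hmu1⟩ : 0 < mu ∧ mu ≤ 1 := hmu ▸ mu_bounds hn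
  set θ := Real.arccos (1 - mu / 2) with hθ
  have hcosθ : Real.cos θ = 1 - mu / 2 := Real.cos_arccos (by linarith) (by linarith)
  have hθpos : 0 < θ := by rw [hθ]; exact Real.arccos_pos.mpr (by linarith)
  have hθpi : θ ≤ Real.pi := Real.arccos_le_pi _
  have hθle : θ ≤ Real.pi / 3 := by
    by_contra hgt
    push_neg at hgt
    have hmono := Real.strictAntiOn_cos
      (Set.mem_Icc.mpr ⟨by positivity, by linarith [Real.pi_pos]⟩)
      (Set.mem_Icc.mpr ⟨le_of_lt hθpos, hθpi⟩) hgt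
    rw [Real.cos_pi_div_three, hcosθ] at hmono
    linarith
  have h2cos : 2 * Real.cos θ = 2 - mu := by rw [hcosθ]; ring
  refine ⟨θ, hθpos, hθle, h2cos, ?_⟩
  have heq : ∀ i : Fin n, (Lap (Qp n) *ᵥ v) i = mu * v i := by
    intro i; rw [hev]; simp
  have trig : ∀ a c : ℝ, 2 * Real.cos a * Real.cos c = Real.cos (a + c) + Real.cos (a - c) := by
    intro a c; rw [Real.cos_add, Real.cos_sub]; ring
  have hrec : ∀ k : ℕ, k ≤ n - 3 →
      v ⟨n - 1 - k, by omega⟩ * Real.cos (θ / 2)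
        = v ⟨n - 1, by omega⟩ * Real.cos (((k : ℝ) + 1/2) * θ) := by
    intro k
    induction k using Nat.strong_induction_on with
    | _ k ih =>
      intro hk
      match k with
      | 0 =>
        have harg : (((0 : ℕ) : ℝ) + 1/2) * θ = θ / 2 := by push_cast; ring
        rw [harg]
        rfl
      | 1 =>
        have e : mu * v ⟨n - 1, by omega⟩
            = v ⟨n - 1, by omega⟩ - v ⟨n - 1 - 1, by omega⟩ := by
          have e2 : (⟨n - 2, by omega⟩ : Fin n) = ⟨n - 1 - 1, by omega⟩ := by
            rw [Fin.mk.injEq]; omega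
          have := (heq ⟨n - 1, by omega⟩).symm.trans (rowlast hn v)
          rwa [e2] at this
        have harg : (((1 : ℕ) : ℝ) + 1/2) * θ = θ + θ / 2 := by push_cast; ring
        rw [harg]
        have htrig := trig θ (θ / 2)
        have harg2 : θ - θ / 2 = θ / 2 := by ring
        rw [harg2] at htrig
        linear_combination (Real.cos (θ / 2)) * e
          + (v ⟨n - 1, by omega⟩) * htrig
          - (v ⟨n - 1, by omega⟩ * Real.cos (θ / 2)) * h2cos
      | (k + 2) =>
        have hrow := rowi hn v (n - 2 - k) (by omega) (by omega)
        have e := (heq ⟨n - 2 - k, by omega⟩).symm.trans hrow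
        have e1 : (⟨n - 2 - k - 1, by omega⟩ : Fin n) = ⟨n - 1 - (k + 2), by omega⟩ := by
          rw [Fin.mk.injEq]; omega
        have e2 : (⟨n - 2 - k, by omega⟩ : Fin n) = ⟨n - 1 - (k + 1), by omega⟩ := by
          rw [Fin.mk.injEq]; omega
        have e3 : (⟨n - 2 - k + 1, by omega⟩ : Fin n) = ⟨n - 1 - k, by omega⟩ := by
          rw [Fin.mk.injEq]; omega
        rw [e2, e1, e3] at e
        have ih1 := ih (k + 1) (by omega) (by omega)
        have ih0 := ih k (by omega) (by omega)
        have hc1 : ((k + 1 : ℕ) : ℝ) + 1/2 = (k : ℝ) + 1 + 1/2 := by push_cast; ring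
        rw [hc1] at ih1
        have htrig := trig θ (((k : ℝ) + 1 + 1/2) * θ)
        have ha1 : θ + ((k : ℝ) + 1 + 1/2) * θ = ((k : ℝ) + 2 + 1/2) * θ := by ring
        have ha2 : θ - ((k : ℝ) + 1 + 1/2) * θ = -(((k : ℝ) + 1/2) * θ) := by ring
        rw [ha1, ha2, Real.cos_neg] at htrig
        have hc2 : (((k + 2 : ℕ) : ℝ) + 1/2) * θ = (((k : ℝ) + 2 + 1/2)) * θ := by
          push_cast; ring
        rw [hc2]
        linear_combination Real.cos (θ / 2) * e + (2 - mu) * ih1 - ih0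
          + (v ⟨n - 1, by omega⟩) * htrig
          - (v ⟨n - 1, by omega⟩ * Real.cos (((k : ℝ) + 1 + 1/2) * θ)) * h2cos
  have hmain := hrec (n - 3) (le_refl _)
  have emain : (⟨n - 1 - (n - 3), by omega⟩ : Fin n) = ⟨2, by omega⟩ := by
    rw [Fin.mk.injEq]; omega
  rw [emain] at hmain
  have hcastn : (((n - 3 : ℕ) : ℝ) + 1/2) * θ = (2 * (n : ℝ) - 5) * θ / 2 := by
    push_cast [Nat.cast_sub (by omega : 3 ≤ n)]
    ring
  rw [hcastn] at hmain
  -- rows 0 and 1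
  have E0 := (heq ⟨0, by omega⟩).symm.trans (row0 hn v)
  have E1 := (heq ⟨1, by omega⟩).symm.trans (row1 hn v)
  set D : ℝ := mu^2 - (2*(n:ℝ) - 1)*mu + 3*(n:ℝ) - 4 with hD
  have hkey : D * (v ⟨1, by omega⟩ - v ⟨0, by omega⟩) = mu * v ⟨2, by omega⟩ := by
    rw [hD]
    linear_combination (1 - mu) * E0 + (mu - 2) * E1
  have hDge : (n : ℝ) / 2 ≤ D := by
    rw [hD]
    nlinarith [mul_nonneg (sub_nonneg.mpr hmu1) (by linarith : (0:ℝ) ≤ 2*(n:ℝ) - 1 - mu)]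
  have hch : 0 < Real.cos (θ / 2) := by
    apply Real.cos_pos_of_mem_Ioo
    constructor
    · linarith [Real.pi_pos]
    · linarith [Real.pi_pos]
  have hcomb : D * (v ⟨1, by omega⟩ - v ⟨0, by omega⟩) * Real.cos (θ / 2)
      = mu * (v ⟨n - 1, by omega⟩ * Real.cos ((2 * (n : ℝ) - 5) * θ / 2)) := by
    rw [hkey]
    rw [mul_assoc, hmain]
  have habs : D * Real.cos (θ / 2) * |v ⟨1, by omega⟩ - v ⟨0, by omega⟩|
      = mu * (|v ⟨n - 1, by omega⟩| * |Real.cos ((2 * (n : ℝ) - 5) * θ / 2)|) := by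
    have := congrArg abs hcomb
    rw [abs_mul, abs_mul, abs_mul, abs_mul] at this
    rw [abs_of_pos (by linarith : (0:ℝ) < D), abs_of_pos hch, abs_of_pos hmu0] at this
    linarith [this]
  rw [div_mul_eq_mul_div, le_div_iff₀ (by positivity : (0:ℝ) < (n:ℝ) * Real.cos (θ / 2))]
  nlinarith [habs, hDge, abs_nonneg (v ⟨1, by omega⟩ - v ⟨0, by omega⟩), hch,
    mul_nonneg (mul_nonneg (by linarith : (0:ℝ) ≤ 2*D - (n:ℝ)) (le_of_lt hch))
      (abs_nonneg (v ⟨1, by omega⟩ - v ⟨0, by omega⟩))]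
end

section
/- Let n ≥ 4 be an integer. Then μ₂(𝔏(Q_n)) ≤ 12(n−2)(n+7)/(n(n²−1)), where μ₂ denotes the second-smallest eigenvalue. -/
open Matrix

open Finset

set_option maxHeartbeats 1000000

noncomputable def xv (n : ℕ) : Fin n → ℝ := fun i => (n:ℝ) - 1 - 2*(i:ℕ)

lemma sumA (n k : ℕ) (f : ℕ → ℝ) :
    ∑ j : Fin n, (if (j:ℕ) = k then f (j:ℕ) else 0) = if k < n then f k else 0 := by
  by_cases hk : k < n
  · rw [if_pos hk, Finset.sum_eq_single (⟨k, hk⟩ : Fin n)]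
    · simp
    · intro b _ hb
      rw [if_neg]
      intro hc; exact hb (Fin.ext hc)
    · simp
  · rw [if_neg hk]
    refine Finset.sum_eq_zero fun j _ => if_neg ?_
    have := j.isLt; omega

lemma sumB (n k m : ℕ) (c : ℝ) :
    ∑ j : Fin n, (if (j:ℕ) + m = k then c else 0)
      = if m ≤ k ∧ k - m < n then c else 0 := by
  by_cases hk : m ≤ k ∧ k - m < n
  · rw [if_pos hk, Finset.sum_eq_single (⟨k - m, hk.2⟩ : Fin n)]
    · simp only [Fin.val_mk]
      rw [if_pos (by omega)]
    · intro b _ hb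
      rw [if_neg]
      intro hc; exact hb (Fin.ext (by simp only [Fin.val_mk]; omega))
    · simp
  · rw [if_neg hk]
    refine Finset.sum_eq_zero fun j _ => if_neg ?_
    have := j.isLt; omega

lemma sumA' (n k : ℕ) (c : ℝ) :
    ∑ j : Fin n, (if (j:ℕ) = k then c else 0) = if k < n then c else 0 :=
  sumA n k (fun _ => c)

lemma Qsymm (n : ℕ) : (Qmat n).IsHermitian := by
  rw [Matrix.IsHermitian, Matrix.conjTranspose_eq_transpose_of_trivial]
  ext i j
  rcases eq_or_ne i j with h | h
  · subst h; rfl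
  · have hv : (i:ℕ) ≠ (j:ℕ) := fun hh => h (Fin.ext hh)
    have hd : (((j:ℕ):ℤ) - ((i:ℕ):ℤ)).natAbs = (((i:ℕ):ℤ) - ((j:ℕ):ℤ)).natAbs := by omega
    simp only [Matrix.transpose_apply, Qmat]
    rw [hd, if_neg (by omega : ¬((((i:ℕ):ℤ) - ((j:ℕ):ℤ)).natAbs = 0))]
    rw [if_neg (by omega : ¬((((i:ℕ):ℤ) - ((j:ℕ):ℤ)).natAbs = 0))]

lemma key (n : ℕ) (hn : 4 ≤ n) (i j : Fin n) :
    Qmat n i j * (xv n i - xv n j) =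
      (if (j:ℕ) = (i:ℕ)+1 then 2*((n:ℝ)-2) else 0)
      + (if (j:ℕ) + 1 = (i:ℕ) then -(2*((n:ℝ)-2)) else 0)
      + (if (j:ℕ) = (i:ℕ)+2 then (8:ℝ) else 0)
      + (if (j:ℕ) + 2 = (i:ℕ) then (-8:ℝ) else 0) := by
  have hi := i.isLt
  have hj := j.isLt
  simp only [Qmat, xv]
  split_ifs
  any_goals ring
  any_goals (exfalso; omega)
  all_goals first
      | (have h' : (j:ℕ) = (i:ℕ) + 1 := by omega
         rw [h']; push_cast; ring)
      | (have h' : (i:ℕ) = (j:ℕ) + 1 := by omega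
         rw [h']; push_cast; ring)
      | (have h' : (j:ℕ) = (i:ℕ) + 2 := by omega
         rw [h']; push_cast; ring)
      | (have h' : (i:ℕ) = (j:ℕ) + 2 := by omega
         rw [h']; push_cast; ring)
      | (have h' : (i:ℕ) = (j:ℕ) := by omega
         rw [h']; ring)

lemma sum_cast' (n : ℕ) : ∑ i ∈ range n, (i:ℝ) = n * (n-1) / 2 := by
  induction n with
  | zero => simp
  | succ m ih => rw [Finset.sum_range_succ, ih]; push_cast; ring

lemma sum_sq' (n : ℕ) : ∑ i ∈ range n, (i:ℝ)^2 = n * (n-1) * (2*n-1) / 6 := by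
  induction n with
  | zero => simp
  | succ m ih => rw [Finset.sum_range_succ, ih]; push_cast; ring

lemma xv_sum (n : ℕ) : ∑ i : Fin n, xv n i = 0 := by
  rw [show (fun i : Fin n => xv n i) = (fun i : Fin n => (fun a : ℕ => (n:ℝ) - 1 - 2*a) (i:ℕ))
    from rfl, Fin.sum_univ_eq_sum_range (fun a : ℕ => (n:ℝ) - 1 - 2*(a:ℝ)) n]
  have h1 := sum_cast' n
  calc ∑ a ∈ range n, ((n:ℝ) - 1 - 2*a)
      = n * ((n:ℝ)-1) - 2 * (n * (n-1)/2) := by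
        rw [Finset.sum_sub_distrib, Finset.sum_const, ← Finset.mul_sum, h1]
        simp [mul_comm]
    _ = 0 := by ring

lemma xv_norm (n : ℕ) : ∑ i : Fin n, xv n i * xv n i = n * ((n:ℝ)^2 - 1) / 3 := by
  rw [show (fun i : Fin n => xv n i * xv n i)
      = (fun i : Fin n => (fun a : ℕ => ((n:ℝ) - 1 - 2*a) * ((n:ℝ) - 1 - 2*a)) (i:ℕ)) from rfl,
    Fin.sum_univ_eq_sum_range (fun a : ℕ => ((n:ℝ) - 1 - 2*a) * ((n:ℝ) - 1 - 2*a)) n]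
  have h1 := sum_cast' n
  have h2 := sum_sq' n
  calc ∑ a ∈ range n, ((n:ℝ) - 1 - 2*a) * ((n:ℝ) - 1 - 2*a)
      = ∑ a ∈ range n, ((((n:ℝ)-1)^2) - (4*((n:ℝ)-1))*(a:ℝ) + 4*(a:ℝ)^2) := by
        refine Finset.sum_congr rfl fun a _ => by ring
    _ = n * (((n:ℝ)-1)^2) - (4*((n:ℝ)-1))*(n * (n-1)/2) + 4*(n * (n-1) * (2*n-1)/6) := by
        rw [Finset.sum_add_distrib, Finset.sum_sub_distrib, Finset.sum_const,
          ← Finset.mul_sum, ← Finset.mul_sum, h1, h2]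
        simp [mul_comm]
    _ = n * ((n:ℝ)^2 - 1) / 3 := by ring

lemma QF (n : ℕ) (hn : 4 ≤ n) :
    xv n ⬝ᵥ (Lap (Qmat n) *ᵥ xv n) = 4*((n:ℝ)-2)*((n:ℝ)+7) := by
  have hmv : Lap (Qmat n) *ᵥ xv n
      = fun i => (∑ j, Qmat n i j) * xv n i - ∑ j, Qmat n i j * xv n j := by
    funext i
    rw [Lap, Matrix.sub_mulVec]
    have hd : (Matrix.diagonal (fun i => ∑ j, Qmat n i j) *ᵥ xv n) i
        = (∑ j, Qmat n i j) * xv n i := Matrix.mulVec_diagonal _ _ _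
    simp only [Pi.sub_apply]
    rw [hd]
    simp only [Matrix.mulVec, dotProduct]
  have h1 : xv n ⬝ᵥ (Lap (Qmat n) *ᵥ xv n)
      = ∑ i, ∑ j, Qmat n i j * (xv n i * (xv n i - xv n j)) := by
    rw [hmv]
    simp only [dotProduct]
    refine Finset.sum_congr rfl fun i _ => ?_
    have e1 : ∑ j, Qmat n i j * (xv n i * (xv n i - xv n j))
        = (∑ j, Qmat n i j) * (xv n i * xv n i) - xv n i * ∑ j, Qmat n i j * xv n j := by
      rw [Finset.sum_mul, Finset.mul_sum, ← Finset.sum_sub_distrib]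
      exact Finset.sum_congr rfl fun j _ => by ring
    rw [e1]; ring
  rw [h1]
  have h2 : ∀ i : Fin n, ∑ j, Qmat n i j * (xv n i * (xv n i - xv n j))
      = xv n i * ((if (i:ℕ)+1 < n then 2*((n:ℝ)-2) else 0)
        + (if 1 ≤ (i:ℕ) ∧ (i:ℕ) - 1 < n then -(2*((n:ℝ)-2)) else 0)
        + (if (i:ℕ)+2 < n then (8:ℝ) else 0)
        + (if 2 ≤ (i:ℕ) ∧ (i:ℕ) - 2 < n then (-8:ℝ) else 0)) := by
    intro i
    calc ∑ j, Qmat n i j * (xv n i * (xv n i - xv n j))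
        = ∑ j, xv n i * (Qmat n i j * (xv n i - xv n j)) := by
          exact Finset.sum_congr rfl fun j _ => by ring
      _ = xv n i * ∑ j, Qmat n i j * (xv n i - xv n j) := by rw [Finset.mul_sum]
      _ = _ := by
          rw [Finset.sum_congr rfl fun j _ => key n hn i j]
          rw [Finset.sum_add_distrib, Finset.sum_add_distrib, Finset.sum_add_distrib,
            sumA' n ((i:ℕ)+1), sumB n (i:ℕ) 1, sumA' n ((i:ℕ)+2), sumB n (i:ℕ) 2]
  rw [Finset.sum_congr rfl fun i _ => h2 i]
  have h3 : ∀ i : Fin n,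
      xv n i * ((if (i:ℕ)+1 < n then 2*((n:ℝ)-2) else 0)
        + (if 1 ≤ (i:ℕ) ∧ (i:ℕ) - 1 < n then -(2*((n:ℝ)-2)) else 0)
        + (if (i:ℕ)+2 < n then (8:ℝ) else 0)
        + (if 2 ≤ (i:ℕ) ∧ (i:ℕ) - 2 < n then (-8:ℝ) else 0))
      = (if (i:ℕ) = 0 then (2*((n:ℝ)-2)+8) * ((n:ℝ) - 1 - 2*(i:ℕ)) else 0)
        + (if (i:ℕ) = 1 then 8 * ((n:ℝ) - 1 - 2*(i:ℕ)) else 0)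
        + (if (i:ℕ) = n-2 then -(8 * ((n:ℝ) - 1 - 2*(i:ℕ))) else 0)
        + (if (i:ℕ) = n-1 then -((2*((n:ℝ)-2)+8) * ((n:ℝ) - 1 - 2*(i:ℕ))) else 0) := by
    intro i
    have hi := i.isLt
    show xv n i * _ = _
    rw [show xv n i = (n:ℝ) - 1 - 2*(i:ℕ) from rfl]
    split_ifs
    any_goals ring
    all_goals (exfalso; omega)
  rw [Finset.sum_congr rfl fun i _ => h3 i]
  rw [Finset.sum_add_distrib, Finset.sum_add_distrib, Finset.sum_add_distrib]
  have e0 := sumA n 0 (fun a => (2*((n:ℝ)-2)+8) * ((n:ℝ) - 1 - 2*a))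
  have e1 := sumA n 1 (fun a => 8 * ((n:ℝ) - 1 - 2*a))
  have e2 := sumA n (n-2) (fun a => -(8 * ((n:ℝ) - 1 - 2*a)))
  have e3 := sumA n (n-1) (fun a => -((2*((n:ℝ)-2)+8) * ((n:ℝ) - 1 - 2*a)))
  simp only [if_pos (show 0 < n by omega), if_pos (show 1 < n by omega),
    if_pos (show n-2 < n by omega), if_pos (show n-1 < n by omega)] at e0 e1 e2 e3
  rw [e0, e1, e2, e3]
  have c2 : ((n-2:ℕ):ℝ) = (n:ℝ) - 2 := by
    have : (2:ℕ) ≤ n := by omega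
    push_cast [this]; ring
  have c1 : ((n-1:ℕ):ℝ) = (n:ℝ) - 1 := by
    have : (1:ℕ) ≤ n := by omega
    push_cast [this]; ring
  rw [c1, c2]
  push_cast
  ring

lemma Lap_herm (n : ℕ) : (Lap (Qmat n)).IsHermitian :=
  (Matrix.isHermitian_diagonal _).sub (Qsymm n)

lemma Lap_ones {n : ℕ} (M : Matrix (Fin n) (Fin n) ℝ) :
    Lap M *ᵥ (fun _ => (1:ℝ)) = 0 := by
  funext i
  rw [Lap, Matrix.sub_mulVec]
  have hd : (Matrix.diagonal (fun i => ∑ j, M i j) *ᵥ (fun _ => (1:ℝ))) i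
      = (∑ j, M i j) * 1 := Matrix.mulVec_diagonal _ _ _
  simp only [Pi.sub_apply, hd]
  simp only [Matrix.mulVec, dotProduct, mul_one]
  simp

theorem stmt10 (n : ℕ) (hn : 4 ≤ n) :
    kthSmallest (Lap (Qmat n)) 2 ≤
      12 * ((n : ℝ) - 2) * ((n : ℝ) + 7) / ((n : ℝ) * ((n : ℝ) ^ 2 - 1)) := by
  have hH : (Lap (Qmat n)).IsHermitian := Lap_herm n
  have hnR : (4:ℝ) ≤ (n:ℝ) := by exact_mod_cast hn
  have hden : (0:ℝ) < (n:ℝ) * ((n:ℝ)^2 - 1) := by nlinarith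
  have hRHS : (0:ℝ) < 12 * ((n:ℝ)-2) * ((n:ℝ)+7) / ((n:ℝ) * ((n:ℝ)^2 - 1)) := by
    apply div_pos (by nlinarith) hden
  by_contra hcon
  push_neg at hcon
  rw [kthSmallest, eigsList, dif_pos hH] at hcon
  have hlen : (Multiset.sort (Finset.univ.val.map hH.eigenvalues) (· ≤ ·)).length = n := by
    rw [Multiset.length_sort, Multiset.card_map]
    simp
  have hsort := Multiset.pairwise_sort (s := Finset.univ.val.map hH.eigenvalues) (r := (· ≤ ·))
  have hperm := Multiset.sort_eq (s := Finset.univ.val.map hH.eigenvalues) (r := (· ≤ ·))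
  obtain ⟨a, s1, h1⟩ := List.exists_cons_of_ne_nil
    (show Multiset.sort (Finset.univ.val.map hH.eigenvalues) (· ≤ ·) ≠ [] by
      intro h; rw [h] at hlen; simp at hlen; omega)
  obtain ⟨b, s2, h2⟩ := List.exists_cons_of_ne_nil
    (show s1 ≠ [] by
      intro h; rw [h] at h1; rw [h1] at hlen; simp at hlen; omega)
  subst h2
  rw [h1] at hcon hsort hperm
  have hb : 12 * ((n:ℝ)-2) * ((n:ℝ)+7) / ((n:ℝ) * ((n:ℝ)^2 - 1)) < b := hcon
  have hb0 : (0:ℝ) < b := lt_trans hRHS hb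
  rw [List.pairwise_cons] at hsort
  have hsort2 := hsort.2
  rw [List.pairwise_cons] at hsort2
  have hb_le : ∀ x ∈ s2, b ≤ x := hsort2.1
  -- at most one eigenvalue below b
  have hcount : ∀ i j : Fin n, hH.eigenvalues i < b → hH.eigenvalues j < b → i = j := by
    have hflt : (Finset.univ.filter (fun i => hH.eigenvalues i < b)).card ≤ 1 := by
      have hcP : (Finset.univ.filter (fun i => hH.eigenvalues i < b)).card
          = Multiset.countP (fun x => x < b) (Finset.univ.val.map hH.eigenvalues) := by
        rw [Multiset.countP_map]
        rfl
      rw [hcP, ← hperm, ← Multiset.cons_coe, ← Multiset.cons_coe,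
        Multiset.countP_cons, Multiset.countP_cons]
      have hz : Multiset.countP (fun x => x < b) (↑s2 : Multiset ℝ) = 0 :=
        Multiset.countP_eq_zero.mpr (fun x hx => not_lt.mpr (hb_le x (by exact_mod_cast hx)))
      rw [hz, if_neg (lt_irrefl b)]
      split_ifs <;> omega
    intro i j hi hj
    exact Finset.card_le_one.mp hflt i (by simp [hi]) j (by simp [hj])
  -- zero is an eigenvalue
  have hones : Lap (Qmat n) *ᵥ (fun _ => (1:ℝ)) = 0 := Lap_ones _
  have hdet : (Lap (Qmat n)).det = 0 := by
    rw [← Matrix.exists_mulVec_eq_zero_iff]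
    refine ⟨fun _ => (1:ℝ), ?_, hones⟩
    intro h
    have := congrFun h ⟨0, by omega⟩
    norm_num at this
  have hprodd := hH.det_eq_prod_eigenvalues
  rw [hdet] at hprodd
  have hprod : ∏ i, hH.eigenvalues i = 0 := by exact_mod_cast hprodd.symm
  obtain ⟨i0, -, hi0⟩ := Finset.prod_eq_zero_iff.mp hprod
  have hgeb : ∀ i, i ≠ i0 → b ≤ hH.eigenvalues i := by
    intro i hi
    by_contra hlt
    push_neg at hlt
    exact hi (hcount i i0 hlt (by rw [hi0]; exact hb0))
  -- spectral decomposition machinery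
  set U : Matrix (Fin n) (Fin n) ℝ := (hH.eigenvectorUnitary : Matrix (Fin n) (Fin n) ℝ) with hU
  have hUV : U * star U = 1 := Matrix.mem_unitaryGroup_iff.mp hH.eigenvectorUnitary.2
  have hVU : star U * U = 1 := Matrix.mem_unitaryGroup_iff'.mp hH.eigenvectorUnitary.2
  set V : Matrix (Fin n) (Fin n) ℝ := star U with hV
  have hVt : Vᵀ = U := by
    rw [hV, Matrix.star_eq_conjTranspose, Matrix.conjTranspose_eq_transpose_of_trivial,
      Matrix.transpose_transpose]
  have hUt : Uᵀ = V := by rw [← hVt, Matrix.transpose_transpose]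
  have hspec : Lap (Qmat n) = U * Matrix.diagonal hH.eigenvalues * V := by
    have h := hH.spectral_theorem
    rw [Unitary.conjStarAlgAut_apply] at h
    rw [hV, hU]
    exact h
  have master : ∀ p q : Fin n → ℝ, (V *ᵥ p) ⬝ᵥ (V *ᵥ q) = p ⬝ᵥ q := by
    intro p q
    rw [Matrix.dotProduct_mulVec, ← Matrix.mulVec_transpose V, hVt,
      Matrix.mulVec_mulVec, hUV, Matrix.one_mulVec]
  have hqform : xv n ⬝ᵥ (Lap (Qmat n) *ᵥ xv n)
      = ∑ i, hH.eigenvalues i * ((V *ᵥ xv n) i * (V *ᵥ xv n) i) := by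
    conv_lhs => rw [hspec]
    rw [← Matrix.mulVec_mulVec, ← Matrix.mulVec_mulVec, Matrix.dotProduct_mulVec,
      ← Matrix.mulVec_transpose U, hUt]
    simp only [dotProduct, Matrix.mulVec_diagonal]
    exact Finset.sum_congr rfl fun i _ => by ring
  set y : Fin n → ℝ := V *ᵥ xv n with hy
  set w : Fin n → ℝ := V *ᵥ (fun _ => (1:ℝ)) with hw
  have hDw : ∀ i, hH.eigenvalues i * w i = 0 := by
    have h0 : Matrix.diagonal hH.eigenvalues *ᵥ w = 0 := by
      have h := congrArg (fun z => V *ᵥ z) hones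
      simp only [Matrix.mulVec_zero] at h
      rw [hspec, Matrix.mulVec_mulVec,
        show V * (U * Matrix.diagonal hH.eigenvalues * V) = Matrix.diagonal hH.eigenvalues * V by
          rw [← mul_assoc, ← mul_assoc, hVU, one_mul],
        ← Matrix.mulVec_mulVec] at h
      exact h
    intro i
    have := congrFun h0 i
    rwa [Matrix.mulVec_diagonal] at this
  have hw_ne : w ≠ 0 := by
    intro h0
    have h1 : U *ᵥ w = (fun _ => (1:ℝ)) := by
      rw [hw, Matrix.mulVec_mulVec, hUV, Matrix.one_mulVec]
    rw [h0, Matrix.mulVec_zero] at h1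
    simpa using congrFun h1 ⟨0, by omega⟩
  have hwi : ∀ i, i ≠ i0 → w i = 0 := by
    intro i hi
    have h := hDw i
    have hbi := hgeb i hi
    have hne : hH.eigenvalues i ≠ 0 := by intro h0; rw [h0] at hbi; linarith
    exact (mul_eq_zero.mp h).resolve_left hne
  have hwi0 : w i0 ≠ 0 := by
    intro h0
    apply hw_ne
    funext i
    by_cases hii : i = i0
    · rw [hii]; exact h0
    · exact hwi i hii
  have hyw : y ⬝ᵥ w = 0 := by
    rw [hy, hw, master]
    simp only [dotProduct, mul_one]
    exact xv_sum n
  have hy0 : y i0 = 0 := by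
    have hsum : y ⬝ᵥ w = y i0 * w i0 := by
      refine Finset.sum_eq_single i0 (fun i _ hi => by rw [hwi i hi, mul_zero]) (by simp)
    have hzz : y i0 * w i0 = 0 := hsum.symm.trans hyw
    exact (mul_eq_zero.mp hzz).resolve_right hwi0
  have hxx : xv n ⬝ᵥ xv n = n*((n:ℝ)^2-1)/3 := xv_norm n
  have hy2 : xv n ⬝ᵥ xv n = ∑ i, y i * y i := by
    rw [← master (xv n) (xv n), ← hy]; rfl
  have hlower : b * (xv n ⬝ᵥ xv n) ≤ xv n ⬝ᵥ (Lap (Qmat n) *ᵥ xv n) := by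
    rw [hqform, hy2, Finset.mul_sum]
    apply Finset.sum_le_sum
    intro i _
    rcases eq_or_ne i i0 with hii | hii
    · rw [hii, hy0]; simp
    · have h1 := hgeb i hii
      nlinarith [mul_self_nonneg (y i)]
  have hQv := QF n hn
  rw [hQv, hxx] at hlower
  have hgt : 4*((n:ℝ)-2)*((n:ℝ)+7) < b * ((n:ℝ)*((n:ℝ)^2-1)/3) := by
    have heq : 4*((n:ℝ)-2)*((n:ℝ)+7)
        = (12 * ((n:ℝ)-2) * ((n:ℝ)+7) / ((n:ℝ) * ((n:ℝ)^2 - 1))) * ((n:ℝ)*((n:ℝ)^2-1)/3) := by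
      have hn0 : (n:ℝ) ≠ 0 := by positivity
      have hn2 : (n:ℝ)^2 - 1 ≠ 0 := by nlinarith
      field_simp
      ring
    rw [heq]
    apply mul_lt_mul_of_pos_right hb
    linarith
  linarith
end
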